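/- Let F_q have characteristic p, a ∈ F_{p^r} where F_{p^r} is a subfield of F_q with q = p^s. Then x^q - x - a = ∏_{j=1}^{p^{s-r}} (x^{p^r} - x - β_j) in F_q[x], where β_1, …, β_{p^{s-r}} are the distinct elements of F_q with Tr_{F_q/F_{p^r}}(β_j) = a. -/

import Mathlib

open Polynomial

section Aux

variable {K F : Type*} [Field K] [Field F] [Algebra K F] [Fintype K] [Fintype F]

/-- The Frobenius `x ↦ x ^ |K|` as a `K`-algebra hom of `F`. -/
def frobAuxHom (p r : ℕ) [Fact p.Prime] [CharP F p]
    (hK : Fintype.card K = p ^ r) : F →ₐ[K] F where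
  toFun := fun x => x ^ Fintype.card K
  map_one' := one_pow _
  map_mul' := fun x y => mul_pow x y _
  map_zero' := zero_pow Fintype.card_ne_zero
  map_add' := fun x y => by rw [hK]; exact add_pow_char_pow x y p r
  commutes' := fun c => by
    show (algebraMap K F c) ^ Fintype.card K = algebraMap K F c
    rw [← map_pow, FiniteField.pow_card]

/-- The Frobenius `x ↦ x ^ |K|` as a `K`-algebra equivalence of `F`. -/
noncomputable def frobAux (p r : ℕ) [Fact p.Prime] [CharP F p]
    (hK : Fintype.card K = p ^ r) : F ≃ₐ[K] F :=
  AlgEquiv.ofBijective (frobAuxHom p r hK)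
    (Finite.injective_iff_bijective.mp (by exact (frobAuxHom (F := F) p r hK).toRingHom.injective))

lemma frobAux_apply (p r : ℕ) [Fact p.Prime] [CharP F p]
    (hK : Fintype.card K = p ^ r) (x : F) : frobAux p r hK x = x ^ Fintype.card K := rfl

lemma frobAux_pow_apply (p r : ℕ) [Fact p.Prime] [CharP F p]
    (hK : Fintype.card K = p ^ r) (i : ℕ) (x : F) :
    (frobAux (K := K) p r hK ^ i) x = x ^ (Fintype.card K) ^ i := by
  induction i with
  | zero => simp
  | succ i ih =>
    rw [pow_succ', AlgEquiv.mul_apply, frobAux_apply, pow_succ, pow_mul, ih]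

end Aux

section Aux2

variable {K F : Type*} [Field K] [Field F] [Algebra K F] [Fintype K] [Fintype F]

lemma trace_formula (p r : ℕ) [Fact p.Prime] [CharP F p]
    (hK : Fintype.card K = p ^ r) (x : F) :
    algebraMap K F (Algebra.trace K F x) =
      ∑ i ∈ Finset.range (Module.finrank K F), x ^ (Fintype.card K) ^ i := by
  classical
  haveI : FiniteDimensional K F := Module.Finite.of_finite
  set n := Module.finrank K F with hn
  set φ := frobAux (K := K) (F := F) p r hK with hφ
  have hq2 : 1 < Fintype.card K := Fintype.one_lt_card
  have hcardF : Fintype.card F = Fintype.card K ^ n := Module.card_eq_pow_finrank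
  have key : ∀ i j : Fin n, (i : ℕ) < (j : ℕ) → φ ^ (i : ℕ) = φ ^ (j : ℕ) → False := by
    intro i j hlt hij
    have hpow : φ ^ ((j : ℕ) - (i : ℕ)) = 1 := by
      have h1 : φ ^ (i : ℕ) * φ ^ ((j : ℕ) - (i : ℕ)) = φ ^ (i : ℕ) * 1 := by
        rw [mul_one, ← pow_add, hij]
        congr 1
        omega
      exact mul_left_cancel h1
    set d := (j : ℕ) - (i : ℕ) with hd
    have hd0 : 0 < d := by omega
    have hdn : d < n := by omega
    have hall : ∀ y : F, y ^ (Fintype.card K) ^ d = y := by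
      intro y
      have := congrArg (fun σ : F ≃ₐ[K] F => σ y) hpow
      rw [hφ] at this; simpa [frobAux_pow_apply] using this
    have hne0 : (X ^ (Fintype.card K) ^ d - X : F[X]) ≠ 0 :=
      FiniteField.X_pow_card_pow_sub_X_ne_zero F hd0.ne' hq2
    have hsub : (Finset.univ : Finset F) ⊆
        (X ^ (Fintype.card K) ^ d - X : F[X]).roots.toFinset := by
      intro y _
      rw [Multiset.mem_toFinset, mem_roots hne0]
      simp [hall y]
    have hle : Fintype.card F ≤ (Fintype.card K) ^ d := by
      calc Fintype.card F = (Finset.univ : Finset F).card := Finset.card_univ.symm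
        _ ≤ (X ^ (Fintype.card K) ^ d - X : F[X]).roots.toFinset.card :=
            Finset.card_le_card hsub
        _ ≤ Multiset.card (X ^ (Fintype.card K) ^ d - X : F[X]).roots :=
            Multiset.toFinset_card_le _
        _ ≤ (X ^ (Fintype.card K) ^ d - X : F[X]).natDegree := card_roots' _
        _ = (Fintype.card K) ^ d := FiniteField.X_pow_card_pow_sub_X_natDegree_eq F hd0.ne' hq2
    have : (Fintype.card K) ^ d < Fintype.card F := by
      rw [hcardF]
      exact Nat.pow_lt_pow_right hq2 hdn
    omega
  have hinj : Function.Injective (fun i : Fin n => φ ^ (i : ℕ)) := by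
    intro i j hij
    by_contra hne
    rcases Nat.lt_or_ge (i : ℕ) (j : ℕ) with h | h
    · exact key i j h hij
    · have h2 : (j : ℕ) < (i : ℕ) := by
        rcases Nat.lt_or_ge (j : ℕ) (i : ℕ) with h' | h'
        · exact h'
        · exact absurd (Fin.ext (le_antisymm h' h)) hne
      exact key j i h2 hij.symm
  have hbij : Function.Bijective (fun i : Fin n => φ ^ (i : ℕ)) := by
    rw [Fintype.bijective_iff_injective_and_card]
    exact ⟨hinj, by rw [Fintype.card_fin, ← Nat.card_eq_fintype_card, IsGalois.card_aut_eq_finrank]⟩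
  rw [trace_eq_sum_automorphisms]
  rw [← Fintype.sum_bijective _ hbij (fun i => x ^ (Fintype.card K) ^ (i : ℕ))
        (fun σ => σ x) (fun i => (frobAux_pow_apply p r hK (i : ℕ) x).symm)]
  rw [Finset.sum_range fun i => x ^ Fintype.card K ^ i]

end Aux2

section Aux3

variable {K F : Type*} [Field K] [Field F] [Algebra K F] [Fintype K] [Fintype F]

lemma aux_poly (p r : ℕ) [Fact p.Prime] [CharP F p]
    (hK : Fintype.card K = p ^ r) (b : K) :
    ∃ g : F[X], g.Monic ∧
      g.natDegree = Fintype.card K ^ (Module.finrank K F - 1) ∧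
      (∀ β : F, Algebra.trace K F β = b ↔ g.IsRoot β) ∧
      g.comp (X ^ Fintype.card K - X) =
        X ^ Fintype.card F - X - C (algebraMap K F b) := by
  classical
  haveI : FiniteDimensional K F := Module.Finite.of_finite
  haveI : CharP F[X] p := charP_of_injective_algebraMap (by rw [Polynomial.algebraMap_eq]; exact Polynomial.C_injective : Function.Injective (algebraMap F F[X])) p
  have hinj : Function.Injective (algebraMap K F) := (algebraMap K F).injective
  set q0 := Fintype.card K with hq0
  set n := Module.finrank K F with hn
  have hq2 : 1 < q0 := Fintype.one_lt_card
  have hcardF : Fintype.card F = q0 ^ n := Module.card_eq_pow_finrank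
  have hn1 : 0 < n := Module.finrank_pos
  obtain ⟨m, hm⟩ : ∃ m, n = m + 1 := ⟨n - 1, by omega⟩
  set b' := algebraMap K F b with hb'
  set T : F[X] := (∑ i ∈ Finset.range m, X ^ q0 ^ i) - C b' with hT
  set g : F[X] := (∑ i ∈ Finset.range n, X ^ q0 ^ i) - C b' with hg
  have hgT : g = X ^ q0 ^ m + T := by
    rw [hg, hT, hm, Finset.sum_range_succ]; ring
  have hTdeg : T.degree < (q0 ^ m : ℕ) := by
    rw [hT]
    refine lt_of_le_of_lt (degree_sub_le _ _) (max_lt ?_ ?_)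
    · refine lt_of_le_of_lt (degree_sum_le _ _) ?_
      rw [Finset.sup_lt_iff (by exact_mod_cast WithBot.bot_lt_coe _)]
      intro i hi
      rw [degree_X_pow]
      exact_mod_cast Nat.pow_lt_pow_right hq2 (Finset.mem_range.mp hi)
    · refine lt_of_le_of_lt (degree_C_le) ?_
      exact_mod_cast pow_pos (by omega : 0 < q0) m
  have hmonic : g.Monic := by rw [hgT]; exact monic_X_pow_add hTdeg
  have hdeg : g.natDegree = q0 ^ (n - 1) := by
    have : g.degree = (q0 ^ m : ℕ) := by
      rw [hgT, add_comm]
      rw [degree_add_eq_right_of_degree_lt (by rwa [degree_X_pow])]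
      exact degree_X_pow _
    rw [natDegree_eq_of_degree_eq_some this]
    congr 1
    omega
  refine ⟨g, hmonic, hdeg, ?_, ?_⟩
  · intro β
    have heval : g.eval β = algebraMap K F (Algebra.trace K F β) - b' := by
      rw [hg, eval_sub, eval_C, eval_finset_sum]
      simp only [eval_pow, eval_X]
      rw [trace_formula p r hK β]
    rw [IsRoot, heval, sub_eq_zero]
    exact ⟨fun h => by rw [h], fun h => hinj h⟩
  · rw [hg, sub_comp, C_comp, sum_comp]
    congr 1
    have hterm : ∀ i, ((X : F[X]) ^ q0 ^ i).comp (X ^ q0 - X) =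
        X ^ q0 ^ (i + 1) - X ^ q0 ^ i := by
      intro i
      rw [X_pow_comp]
      have hqi : q0 ^ i = p ^ (r * i) := by rw [pow_mul, ← hK]
      rw [hqi, sub_pow_char_pow, ← hqi, ← pow_mul, ← pow_succ']
    calc (∑ i ∈ Finset.range n, ((X : F[X]) ^ q0 ^ i).comp (X ^ q0 - X))
        = ∑ i ∈ Finset.range n, ((X : F[X]) ^ q0 ^ (i + 1) - X ^ q0 ^ i) := by
          exact Finset.sum_congr rfl fun i _ => hterm i
      _ = X ^ q0 ^ n - X ^ q0 ^ 0 := Finset.sum_range_sub (fun i => (X : F[X]) ^ q0 ^ i) n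
      _ = X ^ Fintype.card F - X := by rw [hcardF, pow_zero, pow_one]

end Aux3

theorem stmt18 {K F : Type*} [Field K] [Field F] [Algebra K F]
    [Fintype K] [Fintype F] [DecidableEq K]
    (p r s : ℕ) [Fact p.Prime] [CharP F p]
    (hK : Fintype.card K = p ^ r) (hF : Fintype.card F = p ^ s) (a : K) :
    (Finset.univ.filter (fun β : F => Algebra.trace K F β = a)).card = p ^ (s - r) ∧
    (X ^ (Fintype.card F) - X - C (algebraMap K F a) : Polynomial F) =
      ∏ β ∈ Finset.univ.filter (fun β : F => Algebra.trace K F β = a),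
        (X ^ (Fintype.card K) - X - C β) := by
  classical
  have hp : p.Prime := Fact.out
  haveI : FiniteDimensional K F := Module.Finite.of_finite
  have hq2 : 1 < Fintype.card K := Fintype.one_lt_card
  set n := Module.finrank K F with hn
  have hcardF : Fintype.card F = Fintype.card K ^ n := Module.card_eq_pow_finrank
  have hn1 : 0 < n := Module.finrank_pos
  have hs : s = r * n := by
    have h2 : p ^ s = p ^ (r * n) := by rw [← hF, hcardF, hK, ← pow_mul]
    exact Nat.pow_right_injective hp.two_le h2
  -- each fiber of the trace has exactly `card K ^ (n - 1)` elements
  have hle : ∀ b : K, (Finset.univ.filter (fun β : F => Algebra.trace K F β = b)).card ≤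
      Fintype.card K ^ (n - 1) := by
    intro b
    obtain ⟨g, hmono, hdeg, hroot, -⟩ := aux_poly (K := K) (F := F) p r hK b
    have hsub : (Finset.univ.filter (fun β : F => Algebra.trace K F β = b)) ⊆
        g.roots.toFinset := by
      intro β hβ
      rw [Finset.mem_filter] at hβ
      rw [Multiset.mem_toFinset, mem_roots hmono.ne_zero]
      exact (hroot β).mp hβ.2
    calc _ ≤ g.roots.toFinset.card := Finset.card_le_card hsub
      _ ≤ Multiset.card g.roots := Multiset.toFinset_card_le _
      _ ≤ g.natDegree := card_roots' _
      _ = _ := hdeg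
  have key : ∀ b : K, (Finset.univ.filter (fun β : F => Algebra.trace K F β = b)).card =
      Fintype.card K ^ (n - 1) := by
    have hsum : ∑ b : K, (Finset.univ.filter (fun β : F => Algebra.trace K F β = b)).card =
        Fintype.card F := by
      rw [← Finset.card_univ (α := F)]
      exact (Finset.card_eq_sum_card_fiberwise fun β _ => Finset.mem_univ _).symm
    by_contra hcon
    push_neg at hcon
    obtain ⟨b0, hb0⟩ := hcon
    have hlt : ∑ b : K, (Finset.univ.filter (fun β : F => Algebra.trace K F β = b)).card <
        ∑ _b : K, Fintype.card K ^ (n - 1) :=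
      Finset.sum_lt_sum (fun b _ => hle b)
        ⟨b0, Finset.mem_univ _, lt_of_le_of_ne (hle b0) hb0⟩
    rw [hsum, Finset.sum_const, Finset.card_univ, smul_eq_mul, hcardF] at hlt
    have : Fintype.card K ^ n = Fintype.card K * Fintype.card K ^ (n - 1) := by
      rw [← pow_succ']
      congr 1
      omega
    omega
  constructor
  · rw [key a, hK, ← pow_mul]
    congr 1
    obtain ⟨m, hm⟩ : ∃ m, n = m + 1 := ⟨n - 1, by omega⟩
    rw [hs, hm]
    simp only [Nat.add_sub_cancel, Nat.mul_succ]
  · obtain ⟨g, hmono, hdeg, hroot, hcomp⟩ := aux_poly (K := K) (F := F) p r hK a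
    set fib := Finset.univ.filter (fun β : F => Algebra.trace K F β = a) with hfib
    have hfibcard : fib.card = Fintype.card K ^ (n - 1) := key a
    have hle_roots : fib.val ≤ g.roots := by
      rw [Multiset.le_iff_count]
      intro β
      by_cases hβ : β ∈ fib
      · rw [count_roots, Multiset.count_eq_one_of_mem fib.nodup hβ]
        exact Nat.succ_le_of_lt ((rootMultiplicity_pos hmono.ne_zero).mpr
          ((hroot β).mp (Finset.mem_filter.mp hβ).2))
      · rw [Multiset.count_eq_zero_of_notMem (by simpa using hβ)]
        exact Nat.zero_le _
    have hDdvd : (∏ β ∈ fib, (X - C β)) ∣ g := by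
      rw [Finset.prod_eq_multiset_prod]
      exact (Multiset.prod_X_sub_C_dvd_iff_le_roots hmono.ne_zero _).mpr hle_roots
    have hDmonic : (∏ β ∈ fib, (X - C β)).Monic :=
      monic_prod_of_monic _ _ fun β _ => monic_X_sub_C β
    have hDdeg : (∏ β ∈ fib, (X - C β)).natDegree = fib.card := by
      rw [natDegree_prod _ _ fun β _ => X_sub_C_ne_zero β]
      simp [natDegree_X_sub_C]
    have hgD : g = ∏ β ∈ fib, (X - C β) := by
      obtain ⟨c, hc⟩ := hDdvd
      have hc0 : c ≠ 0 := by
        rintro rfl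
        rw [mul_zero] at hc
        exact hmono.ne_zero hc
      have hcd : c.natDegree = 0 := by
        have h3 := natDegree_mul hDmonic.ne_zero hc0
        rw [← hc, hdeg, hDdeg, hfibcard, ← hn] at h3
        omega
      have hcm : c.Monic := by
        have h4 := hmono.leadingCoeff
        rw [hc, leadingCoeff_mul, hDmonic.leadingCoeff, one_mul] at h4
        exact h4
      rw [hc, hcm.natDegree_eq_zero.mp hcd, mul_one]
    calc (X ^ Fintype.card F - X - C (algebraMap K F a) : F[X])
        = g.comp (X ^ Fintype.card K - X) := hcomp.symm
      _ = ∏ β ∈ fib, ((X - C β).comp (X ^ Fintype.card K - X)) := by rw [hgD, prod_comp]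
      _ = ∏ β ∈ fib, (X ^ Fintype.card K - X - C β) :=
          Finset.prod_congr rfl fun β _ => by rw [sub_comp, X_comp, C_comp]
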